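/- Let β > 0 and let (I_x)_{x∈ℤ} be real parameters. For all integers m < n and all integers r with 0 ≤ r ≤ n − m + 1, the crystal partition functions satisfy the system of recursive equations X^r_{m,n} = X^r_{m,n−1} + e^{−β I_{n+1}}·Y^{r−1}_{m,n−1} and Y^r_{m,n} = Y^{r−1}_{m,n−1} + e^{−β I_{n+1}}·X^r_{m,n−1}, with the conventions X^s_{m,n'} = 0 and Y^s_{m,n'} = 0 whenever s < 0 or s > n' − m + 1. -/

import Mathlib

open Finset

/-- Spin configurations on the box `[m, n] ⊆ ℤ`, encoded as boolean functions
(`true` ↔ spin `+1`, `false` ↔ spin `-1`). -/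
abbrev Config (m n : ℤ) := {x // x ∈ Finset.Icc m n} → Bool

/-- The spin value `±1` of the configuration `σ` at the site `x` (value `1` off the box). -/
noncomputable def spin {m n : ℤ} (σ : Config m n) (x : ℤ) : ℝ :=
  if h : x ∈ Finset.Icc m n then (if σ ⟨x, h⟩ then 1 else -1) else 1

/-- The number `N_+(σ)` of sites where `σ` takes the value `+1`. -/
noncomputable def Nplus {m n : ℤ} (σ : Config m n) : ℕ :=
  (Finset.univ.filter fun x => σ x = true).card

/-- The Hamiltonian `H^-` on `[m, n]` with minus boundary spin on both sides. -/
noncomputable def Hminus (I : ℤ → ℝ) (m n : ℤ) (σ : Config m n) : ℝ :=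
  (∑ x ∈ Finset.Icc (m + 1) n, I x * (if spin σ (x - 1) ≠ spin σ x then 1 else 0))
    + I m * (if spin σ m ≠ -1 then 1 else 0)
    + I (n + 1) * (if spin σ n ≠ -1 then 1 else 0)

/-- The Hamiltonian `H^∓` on `[m, n]`: minus boundary spin on the left,
plus boundary spin on the right. -/
noncomputable def Hmp (I : ℤ → ℝ) (m n : ℤ) (σ : Config m n) : ℝ :=
  (∑ x ∈ Finset.Icc (m + 1) n, I x * (if spin σ (x - 1) ≠ spin σ x then 1 else 0))
    + I m * (if spin σ m ≠ -1 then 1 else 0)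
    + I (n + 1) * (if spin σ n ≠ 1 then 1 else 0)

/-- The crystal partition function `X^r_{m,n}` (minus boundary on both sides),
defined for every integer `r`; it vanishes automatically when `r < 0` or
`r > n - m + 1`. -/
noncomputable def X (β : ℝ) (I : ℤ → ℝ) (m n : ℤ) (r : ℤ) : ℝ :=
  ∑ σ ∈ Finset.univ.filter (fun σ : Config m n => (Nplus σ : ℤ) = r),
    Real.exp (-β * Hminus I m n σ)

/-- The crystal partition function `Y^r_{m,n}` (minus boundary on the left,
plus on the right), defined for every integer `r`; it vanishes automatically
when `r < 0` or `r > n - m + 1`. -/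
noncomputable def Y (β : ℝ) (I : ℤ → ℝ) (m n : ℤ) (r : ℤ) : ℝ :=
  ∑ σ ∈ Finset.univ.filter (fun σ : Config m n => (Nplus σ : ℤ) = r),
    Real.exp (-β * Hmp I m n σ)

/-- Extend a configuration on `[m, n-1]` to `[m, n]` with value `b` at `n`. -/
noncomputable def extendCfg {m n : ℤ} (σ' : Config m (n - 1)) (b : Bool) : Config m n :=
  fun x => if h : (x : ℤ) ∈ Finset.Icc m (n - 1) then σ' ⟨x, h⟩ else b

lemma spin_extendCfg {m n : ℤ} (σ' : Config m (n - 1)) (b : Bool) {x : ℤ} (hx : x ≤ n - 1) :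
    spin (extendCfg σ' b) x = spin σ' x := by
  unfold spin extendCfg
  by_cases hm : m ≤ x
  · have h1 : x ∈ Finset.Icc m n := by simp only [Finset.mem_Icc]; omega
    have h2 : x ∈ Finset.Icc m (n - 1) := by simp only [Finset.mem_Icc]; omega
    rw [dif_pos h1, dif_pos h2, dif_pos h2]
  · rw [dif_neg (by simp only [Finset.mem_Icc]; omega),
      dif_neg (by simp only [Finset.mem_Icc]; omega)]

lemma spin_extendCfg_top {m n : ℤ} (hmn : m < n) (σ' : Config m (n - 1)) (b : Bool) :
    spin (extendCfg σ' b) n = if b then 1 else -1 := by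
  have h1 : n ∈ Finset.Icc m n := by simp only [Finset.mem_Icc]; omega
  have h2 : ¬ (n ∈ Finset.Icc m (n - 1)) := by simp only [Finset.mem_Icc]; omega
  unfold spin extendCfg
  rw [dif_pos h1, dif_neg h2]

lemma Icc_split {a b : ℤ} (h : a ≤ b) :
    Finset.Icc a b = insert b (Finset.Icc a (b - 1)) := by
  ext x
  simp only [Finset.mem_Icc, Finset.mem_insert]
  omega

lemma Nplus_eq {m n : ℤ} (σ : Config m n) :
    Nplus σ = ((Finset.Icc m n).filter fun x => spin σ x = 1).card := by
  unfold Nplus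
  refine Finset.card_bij (fun a _ => a.1) ?_ ?_ ?_
  · intro a ha
    simp only [Finset.mem_filter, Finset.mem_univ, true_and] at ha
    simp only [Finset.mem_filter]
    refine ⟨a.2, ?_⟩
    simp [spin, a.2, ha]
  · intro a _ b _ h
    exact Subtype.ext h
  · intro x hx
    simp only [Finset.mem_filter] at hx
    obtain ⟨h1, h2⟩ := hx
    refine ⟨⟨x, h1⟩, ?_, rfl⟩
    simp only [Finset.mem_filter, Finset.mem_univ, true_and]
    by_contra hb
    rw [spin, dif_pos h1, if_neg hb] at h2
    norm_num at h2

lemma Nplus_extendCfg {m n : ℤ} (hmn : m < n) (σ' : Config m (n - 1)) (b : Bool) :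
    (Nplus (extendCfg σ' b) : ℤ) = Nplus σ' + (if b then 1 else 0) := by
  rw [Nplus_eq, Nplus_eq, Icc_split (le_of_lt hmn), Finset.filter_insert]
  have hfc : (Finset.Icc m (n - 1)).filter (fun x => spin (extendCfg σ' b) x = 1)
      = (Finset.Icc m (n - 1)).filter (fun x => spin σ' x = 1) := by
    apply Finset.filter_congr
    intro x hx
    simp only [Finset.mem_Icc] at hx
    rw [spin_extendCfg σ' b (by omega)]
  rw [spin_extendCfg_top hmn]
  cases b
  · rw [if_neg (by norm_num), hfc]
    simp
  · rw [if_pos (by norm_num), hfc, Finset.card_insert_of_notMem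
      (by simp only [Finset.mem_filter, Finset.mem_Icc]; omega)]
    push_cast
    simp

lemma Hsum_extendCfg {m n : ℤ} (hmn : m < n) (I : ℤ → ℝ) (σ' : Config m (n - 1)) (b : Bool) :
    (∑ x ∈ Finset.Icc (m + 1) n,
        I x * (if spin (extendCfg σ' b) (x - 1) ≠ spin (extendCfg σ' b) x then 1 else 0))
    = (∑ x ∈ Finset.Icc (m + 1) (n - 1), I x * (if spin σ' (x - 1) ≠ spin σ' x then 1 else 0))
      + I n * (if spin σ' (n - 1) ≠ (if b then 1 else -1) then 1 else 0) := by
  rw [Icc_split (by omega : m + 1 ≤ n),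
    Finset.sum_insert (by simp only [Finset.mem_Icc]; omega),
    spin_extendCfg σ' b (by omega : n - 1 ≤ n - 1), spin_extendCfg_top hmn, add_comm]
  congr 1
  apply Finset.sum_congr rfl
  intro x hx
  simp only [Finset.mem_Icc] at hx
  rw [spin_extendCfg σ' b (by omega : x - 1 ≤ n - 1), spin_extendCfg σ' b (by omega : x ≤ n - 1)]

lemma Hminus_extendCfg_false {m n : ℤ} (hmn : m < n) (I : ℤ → ℝ) (σ' : Config m (n - 1)) :
    Hminus I m n (extendCfg σ' false) = Hminus I m (n - 1) σ' := by
  unfold Hminus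
  rw [Hsum_extendCfg hmn, spin_extendCfg σ' false (by omega : m ≤ n - 1),
    spin_extendCfg_top hmn]
  norm_num
  ring

lemma Hminus_extendCfg_true {m n : ℤ} (hmn : m < n) (I : ℤ → ℝ) (σ' : Config m (n - 1)) :
    Hminus I m n (extendCfg σ' true) = Hmp I m (n - 1) σ' + I (n + 1) := by
  unfold Hminus Hmp
  rw [Hsum_extendCfg hmn, spin_extendCfg σ' true (by omega : m ≤ n - 1),
    spin_extendCfg_top hmn]
  norm_num
  ring

lemma Hmp_extendCfg_true {m n : ℤ} (hmn : m < n) (I : ℤ → ℝ) (σ' : Config m (n - 1)) :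
    Hmp I m n (extendCfg σ' true) = Hmp I m (n - 1) σ' := by
  unfold Hmp
  rw [Hsum_extendCfg hmn, spin_extendCfg σ' true (by omega : m ≤ n - 1),
    spin_extendCfg_top hmn]
  norm_num
  ring

lemma Hmp_extendCfg_false {m n : ℤ} (hmn : m < n) (I : ℤ → ℝ) (σ' : Config m (n - 1)) :
    Hmp I m n (extendCfg σ' false) = Hminus I m (n - 1) σ' + I (n + 1) := by
  unfold Hminus Hmp
  rw [Hsum_extendCfg hmn, spin_extendCfg σ' false (by omega : m ≤ n - 1),
    spin_extendCfg_top hmn]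
  norm_num
  ring

/-- The equivalence splitting off the last spin. -/
noncomputable def configEquiv {m n : ℤ} (hmn : m < n) : Config m (n - 1) × Bool ≃ Config m n where
  toFun p := extendCfg p.1 p.2
  invFun σ := (fun x => σ ⟨x.1, by
      have := x.2; simp only [Finset.mem_Icc] at this ⊢; omega⟩,
    σ ⟨n, by simp only [Finset.mem_Icc]; omega⟩)
  left_inv p := by
    obtain ⟨σ', b⟩ := p
    refine Prod.ext (funext fun x => ?_) ?_
    · show extendCfg σ' b ⟨x.1, _⟩ = σ' x
      rw [extendCfg, dif_pos x.2]
    · show extendCfg σ' b ⟨n, _⟩ = b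
      rw [extendCfg, dif_neg (by simp only [Finset.mem_Icc]; omega)]
  right_inv σ := by
    funext x
    show extendCfg _ _ x = σ x
    rw [extendCfg]
    by_cases h : (x : ℤ) ∈ Finset.Icc m (n - 1)
    · rw [dif_pos h]
    · rw [dif_neg h]
      have hx := x.2
      simp only [Finset.mem_Icc] at h hx
      have : (x : ℤ) = n := by omega
      exact congrArg σ (Subtype.ext this.symm)

/-- The system of recursive equations (16) for the crystal partition functions
`X^r_{m,n}` and `Y^r_{m,n}` (here `X^s_{m,n'} = Y^s_{m,n'} = 0` automatically
whenever `s < 0` or `s > n' - m + 1`). -/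
theorem stmt_7 (β : ℝ) (hβ : 0 < β) (I : ℤ → ℝ)
    (m n : ℤ) (hmn : m < n) (r : ℤ) (hr0 : 0 ≤ r) (hr1 : r ≤ n - m + 1) :
    X β I m n r = X β I m (n - 1) r + Real.exp (-β * I (n + 1)) * Y β I m (n - 1) (r - 1) ∧
    Y β I m n r = Y β I m (n - 1) (r - 1) + Real.exp (-β * I (n + 1)) * X β I m (n - 1) r := by
  have hkey : ∀ f : Config m n → ℝ,
      ∑ σ : Config m n, f σ
        = ∑ σ' : Config m (n - 1), (f (extendCfg σ' false) + f (extendCfg σ' true)) := by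
    intro f
    rw [← Equiv.sum_comp (configEquiv hmn) f, Fintype.sum_prod_type]
    refine Finset.sum_congr rfl fun σ' _ => ?_
    rw [Fintype.sum_bool]
    show f (extendCfg σ' true) + f (extendCfg σ' false) = _
    ring
  have hNf : ∀ σ' : Config m (n - 1),
      ((Nplus (extendCfg σ' false : Config m n) : ℤ) = r) = ((Nplus σ' : ℤ) = r) := by
    intro σ'
    rw [Nplus_extendCfg hmn]
    simp
  have hNt : ∀ σ' : Config m (n - 1),
      ((Nplus (extendCfg σ' true : Config m n) : ℤ) = r) = ((Nplus σ' : ℤ) = r - 1) := by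
    intro σ'
    rw [Nplus_extendCfg hmn, if_pos rfl, eq_iff_iff]
    omega
  have hexp : ∀ H : ℝ, Real.exp (-β * (H + I (n + 1)))
      = Real.exp (-β * I (n + 1)) * Real.exp (-β * H) := by
    intro H
    rw [← Real.exp_add]
    congr 1
    ring
  constructor
  · rw [X, Finset.sum_filter, hkey, X, Y, Finset.sum_filter, Finset.sum_filter,
      Finset.mul_sum, ← Finset.sum_add_distrib]
    refine Finset.sum_congr rfl fun σ' _ => ?_
    rw [Hminus_extendCfg_false hmn, Hminus_extendCfg_true hmn]
    simp only [hNf, hNt]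
    rw [hexp, mul_ite, mul_zero]
  · rw [Y, Finset.sum_filter, hkey, X, Y, Finset.sum_filter, Finset.sum_filter,
      Finset.mul_sum, ← Finset.sum_add_distrib]
    refine Finset.sum_congr rfl fun σ' _ => ?_
    rw [Hmp_extendCfg_false hmn, Hmp_extendCfg_true hmn]
    simp only [hNf, hNt]
    rw [hexp, mul_ite, mul_zero]
    exact add_comm _ _
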